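/- Let F₁,…,F_m be nonempty compact convex sets of density matrices, F = conv(∪_k F_k), and for each k let Rmax_k and Rmin_k denote the generalized robustness (dual form) and reciprocal-overlap measures relative to F_k, and Rmax, Rmin those relative to F. Assume for each k and all pure states ψ that Rmax_k(ψ) ≥ Rmin_k(ψ), and suppose the pure state φ maximizes Rmin_{k*} where k* = argmin_k Rmin_k(φ), and that Rmax_{k*}(φ) = Rmin_{k*}(φ). Then Rmax(φ) = min_k Rmax_k(φ) = Rmin(φ), and φ maximizes Rmin over pure states. -/

import Mathlib

open Matrix
open scoped ComplexOrder

/-- Hilbert–Schmidt inner product (real part of Tr(A B)) on matrices. -/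
noncomputable def ip {n : Type*} [Fintype n] (A B : Matrix n n ℂ) : ℝ := ((A * B).trace).re

/-- A density matrix: positive semidefinite with trace one. -/
def IsDensity {n : Type*} [Fintype n] (ρ : Matrix n n ℂ) : Prop := ρ.PosSemidef ∧ ρ.trace = 1

/-- A pure state: a rank-one (trace-one) projection. -/
def IsPure {n : Type*} [Fintype n] (P : Matrix n n ℂ) : Prop := IsDensity P ∧ P * P = P

/-- Generalized robustness, dual form. -/
noncomputable def Rmax {n : Type*} [Fintype n] (F : Set (Matrix n n ℂ)) (ρ : Matrix n n ℂ) : ℝ :=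
  sSup {x : ℝ | ∃ W : Matrix n n ℂ, W.PosSemidef ∧ (∀ σ ∈ F, ip W σ ≤ 1) ∧ x = ip ρ W}

/-- Maximal overlap with the free set. -/
noncomputable def RminInv {n : Type*} [Fintype n] (F : Set (Matrix n n ℂ)) (φ : Matrix n n ℂ) : ℝ :=
  sSup {x : ℝ | ∃ σ ∈ F, x = ip φ σ}

/-- Rmin: reciprocal of maximal overlap with the free set. -/
noncomputable def Rmin {n : Type*} [Fintype n] (F : Set (Matrix n n ℂ)) (φ : Matrix n n ℂ) : ℝ :=
  1 / RminInv F φ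

section helpers
set_option linter.unusedSectionVars false
variable {n : Type*} [Fintype n] [DecidableEq n]

lemma psd_diag_nonneg {A : Matrix n n ℂ} (hA : A.PosSemidef) (i : n) : 0 ≤ A i i := by
  have h := hA.dotProduct_mulVec_nonneg (Pi.single i 1)
  have hs : star (Pi.single i 1 : n → ℂ) = Pi.single i 1 := by
    ext k; by_cases hk : k = i <;> simp [Pi.single_apply, hk]
  rw [hs, Matrix.mulVec_single, single_dotProduct] at h
  simpa using h

lemma psd_trace_nonneg {A : Matrix n n ℂ} (hA : A.PosSemidef) : 0 ≤ A.trace := by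
  rw [Matrix.trace]
  exact Finset.sum_nonneg fun i _ => psd_diag_nonneg hA i

lemma ip_nonneg {A B : Matrix n n ℂ} (hA : A.PosSemidef) (hB : B.PosSemidef) : 0 ≤ ip A B := by
  obtain ⟨C, rfl⟩ : ∃ C : Matrix n n ℂ, A = Cᴴ * C := by
    classical
    open scoped MatrixOrder in
    obtain ⟨B, rfl⟩ := CStarAlgebra.nonneg_iff_eq_star_mul_self.mp hA.nonneg
    exact ⟨B, rfl⟩
  have h1 : (Cᴴ * C * B).trace = (C * B * Cᴴ).trace := by
    rw [mul_assoc, Matrix.trace_mul_comm, mul_assoc]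
  have h2 : (0:ℂ) ≤ (C * B * Cᴴ).trace := psd_trace_nonneg (hB.mul_mul_conjTranspose_same C)
  rw [ip, h1]
  exact (Complex.nonneg_iff.mp h2).1

omit [DecidableEq n] in
lemma psd_trace_zero {A : Matrix n n ℂ} (hA : A.PosSemidef) (h : A.trace = 0) : A = 0 := by
  obtain ⟨C, rfl⟩ : ∃ C : Matrix n n ℂ, A = Cᴴ * C := by
    classical
    open scoped MatrixOrder in
    obtain ⟨B, rfl⟩ := CStarAlgebra.nonneg_iff_eq_star_mul_self.mp hA.nonneg
    exact ⟨B, rfl⟩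
  have hC : C = 0 := by
    have htr : (Cᴴ * C).trace = ∑ j, ∑ i, (starRingEnd ℂ) (C i j) * C i j := by
      simp [Matrix.trace, Matrix.diag, Matrix.mul_apply, Matrix.conjTranspose_apply]
    rw [htr] at h
    have hre : (∑ j, ∑ i, Complex.normSq (C i j) : ℝ) = 0 := by
      have := congrArg Complex.re h
      simpa [Complex.mul_conj', Complex.normSq_eq_conj_mul_self, Complex.normSq_apply] using this
    ext i j
    have h1 : ∀ j' ∈ Finset.univ, (0:ℝ) ≤ ∑ i, Complex.normSq (C i j') :=
      fun j' _ => Finset.sum_nonneg fun i _ => Complex.normSq_nonneg _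
    have h2 := (Finset.sum_eq_zero_iff_of_nonneg h1).mp hre j (Finset.mem_univ j)
    have h3 := (Finset.sum_eq_zero_iff_of_nonneg
      (fun i' _ => Complex.normSq_nonneg (C i' j))).mp h2 i (Finset.mem_univ i)
    simpa [Complex.normSq_eq_zero] using h3
  simp [hC]

lemma ip_smul_left (r : ℝ) (A B : Matrix n n ℂ) : ip ((r:ℂ) • A) B = r * ip A B := by
  simp [ip, Matrix.smul_mul, Matrix.trace_smul, Complex.real_smul]

lemma ip_smul_right (r : ℝ) (A B : Matrix n n ℂ) : ip A ((r:ℂ) • B) = r * ip A B := by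
  simp [ip, Matrix.mul_smul, Matrix.trace_smul, Complex.real_smul]

lemma ip_add_right (A B C : Matrix n n ℂ) : ip A (B + C) = ip A B + ip A C := by
  simp [ip, Matrix.mul_add, Matrix.trace_add]

lemma real_smul_eq (a : ℝ) (A : Matrix n n ℂ) : a • A = (a:ℂ) • A := by
  ext i j; simp [Complex.real_smul]

lemma psd_smul {A : Matrix n n ℂ} (hA : A.PosSemidef) {r : ℝ} (hr : 0 ≤ r) :
    ((r:ℂ) • A).PosSemidef := by
  refine Matrix.PosSemidef.of_dotProduct_mulVec_nonneg ?_ ?_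
  · rw [Matrix.IsHermitian, Matrix.conjTranspose_smul, hA.1]
    norm_num
  · intro x
    have h0 := hA.dotProduct_mulVec_nonneg x
    rw [Matrix.smul_mulVec, dotProduct_smul]
    rw [Complex.nonneg_iff] at h0 ⊢
    rw [smul_eq_mul]
    refine ⟨?_, ?_⟩
    · rw [Complex.mul_re]
      simp only [Complex.ofReal_re, Complex.ofReal_im, zero_mul, sub_zero]
      exact mul_nonneg hr h0.1
    · rw [Complex.mul_im]
      simp only [Complex.ofReal_re, Complex.ofReal_im, zero_mul, add_zero, ← h0.2, mul_zero]

lemma idem_psd {Q : Matrix n n ℂ} (h1 : Q.IsHermitian) (h2 : Q * Q = Q) : Q.PosSemidef := by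
  have := Matrix.posSemidef_conjTranspose_mul_self Q
  rwa [h1.eq, h2] at this

lemma one_sub_pure {P : Matrix n n ℂ} (hP : IsPure P) : (1 - P).PosSemidef := by
  refine idem_psd ?_ ?_
  · rw [Matrix.IsHermitian, Matrix.conjTranspose_sub, Matrix.conjTranspose_one, hP.1.1.1.eq]
  · rw [sub_mul, one_mul, mul_sub, mul_one, hP.2]
    abel

lemma ip_le_one {P σ : Matrix n n ℂ} (hP : IsPure P) (hσ : IsDensity σ) :
    ip P σ ≤ 1 := by
  have h := ip_nonneg (one_sub_pure hP) hσ.1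
  have he : ip (1 - P) σ = 1 - ip P σ := by
    have h1 : (1 - P) * σ = σ - P * σ := by rw [sub_mul, one_mul]
    rw [ip, h1, Matrix.trace_sub, Complex.sub_re, hσ.2]
    simp [ip]
  linarith [he ▸ h]

omit [DecidableEq n] in
lemma vmv_conjT (v : n → ℂ) : (vecMulVec v (star v))ᴴ = vecMulVec v (star v) := by
  ext i j
  simp [Matrix.vecMulVec_apply, Matrix.conjTranspose_apply, mul_comm]

omit [DecidableEq n] in
lemma vmv_mulVec (u w x : n → ℂ) : vecMulVec u w *ᵥ x = (w ⬝ᵥ x) • u := by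
  ext i
  simp only [Matrix.mulVec, Matrix.vecMulVec_apply, dotProduct, Pi.smul_apply, smul_eq_mul,
    Finset.sum_mul, Finset.mul_sum]
  exact Finset.sum_congr rfl fun k _ => by ring

omit [DecidableEq n] in
lemma vmv_psd (v : n → ℂ) : (vecMulVec v (star v)).PosSemidef := by
  refine Matrix.PosSemidef.of_dotProduct_mulVec_nonneg (vmv_conjT v) fun x => ?_
  rw [vmv_mulVec, dotProduct_smul]
  have h1 : star x ⬝ᵥ v = star (star v ⬝ᵥ x) := by
    simp [dotProduct, Finset.sum_comm, mul_comm, star_sum]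
  rw [smul_eq_mul, h1]
  exact mul_star_self_nonneg (star v ⬝ᵥ x)

omit [DecidableEq n] in
lemma vmv_trace (u w : n → ℂ) : (vecMulVec u w).trace = w ⬝ᵥ u := by
  simp [Matrix.trace, Matrix.diag, Matrix.vecMulVec_apply, dotProduct, mul_comm]

omit [DecidableEq n] in
lemma mul_vmv (A : Matrix n n ℂ) (u w : n → ℂ) : A * vecMulVec u w = vecMulVec (A *ᵥ u) w := by
  ext i j
  simp [Matrix.mul_apply, Matrix.vecMulVec_apply, Matrix.mulVec, dotProduct, Finset.sum_mul,
    mul_assoc]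

omit [DecidableEq n] in
lemma vmv_mul (u w : n → ℂ) (A : Matrix n n ℂ) :
    vecMulVec u w * A = vecMulVec u (w ᵥ* A) := by
  ext i j
  simp [Matrix.mul_apply, Matrix.vecMulVec_apply, Matrix.vecMul, dotProduct, Finset.mul_sum,
    mul_assoc]

omit [DecidableEq n] in
lemma vmv_mul_vmv (u w x y : n → ℂ) :
    vecMulVec u w * vecMulVec x y = (w ⬝ᵥ x) • vecMulVec u y := by
  ext i j
  simp only [Matrix.mul_apply, Matrix.vecMulVec_apply, Matrix.smul_apply, dotProduct,
    Finset.sum_mul, smul_eq_mul, Finset.mul_sum]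
  exact Finset.sum_congr rfl fun k _ => by ring

omit [DecidableEq n] in
lemma trace_vmv_mul (v : n → ℂ) (σ : Matrix n n ℂ) :
    (vecMulVec v (star v) * σ).trace = star v ⬝ᵥ (σ *ᵥ v) := by
  rw [Matrix.trace]
  simp only [Matrix.diag, Matrix.mul_apply, Matrix.vecMulVec_apply, dotProduct, Matrix.mulVec,
    Pi.star_apply]
  rw [Finset.sum_comm]
  refine Finset.sum_congr rfl fun j _ => ?_
  rw [Finset.mul_sum]
  exact Finset.sum_congr rfl fun i _ => by ring

omit [DecidableEq n] in
lemma ip_vmv (v : n → ℂ) (σ : Matrix n n ℂ) :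
    ip (vecMulVec v (star v)) σ = (star v ⬝ᵥ (σ *ᵥ v)).re := by
  rw [ip, trace_vmv_mul]

omit [DecidableEq n] in
lemma pure_vmv {v : n → ℂ} (hv : star v ⬝ᵥ v = 1) : IsPure (vecMulVec v (star v)) := by
  refine ⟨⟨vmv_psd v, ?_⟩, ?_⟩
  · rw [vmv_trace]
    simpa using hv
  · rw [vmv_mul_vmv, hv, one_smul]

lemma pure_decomp {P : Matrix n n ℂ} (hP : IsPure P) :
    ∃ v : n → ℂ, star v ⬝ᵥ v = 1 ∧ P = vecMulVec v (star v) := by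
  obtain ⟨⟨hpsd, htr⟩, hidem⟩ := hP
  have hex : ∃ j, P j j ≠ 0 := by
    by_contra h
    push_neg at h
    have h0 : P.trace = 0 := by
      simp [Matrix.trace, Matrix.diag, h]
    rw [htr] at h0
    exact one_ne_zero h0
  obtain ⟨j, hj⟩ := hex
  set u : n → ℂ := fun i => P i j with hu
  have hPu : P *ᵥ u = u := by
    ext i
    have h2 := congrFun (congrFun hidem i) j
    simpa [Matrix.mulVec, dotProduct, hu, Matrix.mul_apply] using h2
  have hherm : ∀ i, star (P i j) = P j i := by
    intro i
    have := congrFun (congrFun hpsd.1.eq j) i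
    simpa [Matrix.conjTranspose_apply] using this
  have hstar_u : star u ⬝ᵥ u = P j j := by
    have h2 := congrFun (congrFun hidem j) j
    rw [Matrix.mul_apply] at h2
    calc star u ⬝ᵥ u = ∑ i, P j i * P i j := by
          simp [dotProduct, hu, hherm]
      _ = P j j := h2
  have hdiag := psd_diag_nonneg hpsd j
  set c : ℝ := (P j j).re with hc
  have hPjj : P j j = (c : ℂ) := by
    rw [Complex.nonneg_iff] at hdiag
    exact Complex.ext rfl (by simp [← hdiag.2])
  have hcpos : 0 < c := by
    rcases lt_or_eq_of_le (Complex.nonneg_iff.mp hdiag).1 with h | h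
    · exact h
    · refine absurd ?_ hj
      rw [hPjj, hc, ← h, Complex.ofReal_zero]
  have hc0 : (c : ℂ) ≠ 0 := by
    simpa using ne_of_gt hcpos
  set M : Matrix n n ℂ := vecMulVec u (star u) with hM
  set a : ℂ := (c : ℂ)⁻¹ with ha
  have hPM : P * M = M := by rw [hM, mul_vmv, hPu]
  have h3 : star u ᵥ* P = star u := by
    have h4 := Matrix.star_mulVec (M := P) (v := u)
    rw [hPu, hpsd.1.eq] at h4
    exact h4.symm
  have hMP : M * P = M := by
    rw [hM, vmv_mul, h3]
  have hM2 : M * M = (c : ℂ) • M := by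
    rw [hM, vmv_mul_vmv, hstar_u, hPjj]
  set Q : Matrix n n ℂ := P - a • M with hQ
  have hQherm : Q.IsHermitian := by
    rw [Matrix.IsHermitian, hQ, Matrix.conjTranspose_sub, Matrix.conjTranspose_smul, hpsd.1.eq,
      hM, vmv_conjT]
    congr 1
    rw [ha]
    simp [Complex.star_def, map_inv₀, Complex.conj_ofReal]
  have hac : a * (c : ℂ) = 1 := inv_mul_cancel₀ hc0
  have hQidem : Q * Q = Q := by
    have e1 : (a • M) * (a • M) = a • M := by
      rw [Matrix.smul_mul, Matrix.mul_smul, hM2, smul_smul, smul_smul, mul_assoc, hac, mul_one]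
    rw [hQ, sub_mul, mul_sub, mul_sub, hidem, e1, Matrix.mul_smul, hPM, Matrix.smul_mul, hMP]
    abel
  have htrQ : Q.trace = 0 := by
    rw [hQ, Matrix.trace_sub, Matrix.trace_smul, htr, hM, vmv_trace, hstar_u, hPjj, smul_eq_mul,
      hac, sub_self]
  have hQ0 : Q = 0 := psd_trace_zero (idem_psd hQherm hQidem) htrQ
  have hPaM : P = a • M := by
    rw [hQ] at hQ0
    exact sub_eq_zero.mp hQ0
  set b : ℂ := ((Real.sqrt c : ℝ) : ℂ)⁻¹ with hb
  have hsb : star b = b := by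
    rw [hb]
    simp [Complex.star_def, map_inv₀, Complex.conj_ofReal]
  have hbb : b * b = a := by
    rw [hb, ha, ← mul_inv, ← Complex.ofReal_mul, Real.mul_self_sqrt hcpos.le]
  refine ⟨b • u, ?_, ?_⟩
  · rw [star_smul, smul_dotProduct, dotProduct_smul, hsb, smul_eq_mul, smul_eq_mul,
      ← mul_assoc, hbb, hstar_u, hPjj, ha, inv_mul_cancel₀ hc0]
  · rw [hPaM]
    ext i k
    simp only [Matrix.smul_apply, hM, Matrix.vecMulVec_apply, Pi.star_apply, Pi.smul_apply,
      smul_eq_mul, star_mul', hsb]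
    rw [← hbb]
    ring

omit [DecidableEq n] in
lemma overlap_max {G : Set (Matrix n n ℂ)} (hG : IsCompact G) (hGne : G.Nonempty)
    (ψ : Matrix n n ℂ) :
    ∃ σ ∈ G, RminInv G ψ = ip ψ σ ∧ ∀ τ ∈ G, ip ψ τ ≤ ip ψ σ := by
  have hcont : Continuous fun σ : Matrix n n ℂ => ip ψ σ :=
    Complex.continuous_re.comp ((continuous_const.matrix_mul continuous_id).matrix_trace)
  obtain ⟨σ, hσG, hmax⟩ := hG.exists_isMaxOn hGne hcont.continuousOn
  refine ⟨σ, hσG, ?_, fun τ hτ => hmax hτ⟩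
  apply le_antisymm
  · refine csSup_le ⟨ip ψ σ, σ, hσG, rfl⟩ ?_
    rintro x ⟨τ, hτ, rfl⟩
    exact hmax hτ
  · exact le_csSup ⟨ip ψ σ, by rintro x ⟨τ, hτ, rfl⟩; exact hmax hτ⟩ ⟨σ, hσG, rfl⟩

end helpers

/-- Golden states for genuine multipartite-type resources. -/
theorem stmt19 {d m : ℕ} (hm : 0 < m) (F : Fin m → Set (Matrix (Fin d) (Fin d) ℂ))
    (hne : ∀ k, (F k).Nonempty) (hc : ∀ k, IsCompact (F k)) (hcv : ∀ k, Convex ℝ (F k))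
    (hdens : ∀ k, ∀ σ ∈ F k, IsDensity σ)
    (hRm : ∀ k, ∀ ψ : Matrix (Fin d) (Fin d) ℂ, IsPure ψ → Rmin (F k) ψ ≤ Rmax (F k) ψ)
    (φ : Matrix (Fin d) (Fin d) ℂ) (hφ : IsPure φ) (kstar : Fin m)
    (hargmin : ∀ k, Rmin (F kstar) φ ≤ Rmin (F k) φ)
    (hmaxim : ∀ ψ : Matrix (Fin d) (Fin d) ℂ, IsPure ψ → Rmin (F kstar) ψ ≤ Rmin (F kstar) φ)
    (heq : Rmax (F kstar) φ = Rmin (F kstar) φ) :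
    Rmax (convexHull ℝ (⋃ k, F k)) φ = Rmin (convexHull ℝ (⋃ k, F k)) φ ∧
    (∀ k, Rmax (convexHull ℝ (⋃ k, F k)) φ ≤ Rmax (F k) φ) ∧
    (∃ k, Rmax (convexHull ℝ (⋃ k, F k)) φ = Rmax (F k) φ) ∧
    (∀ ψ : Matrix (Fin d) (Fin d) ℂ, IsPure ψ →
      Rmin (convexHull ℝ (⋃ k, F k)) ψ ≤ Rmin (convexHull ℝ (⋃ k, F k)) φ) := by
  classical
  set Fh : Set (Matrix (Fin d) (Fin d) ℂ) := convexHull ℝ (⋃ k, F k) with hFhdef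
  have hsub : ∀ k, F k ⊆ Fh := fun k => (Set.subset_iUnion F k).trans (subset_convexHull ℝ _)
  have hFhdens : ∀ σ ∈ Fh, IsDensity σ := by
    have hconv : Convex ℝ {σ : Matrix (Fin d) (Fin d) ℂ | IsDensity σ} := by
      intro x hx y hy a b ha hb hab
      refine ⟨?_, ?_⟩
      · rw [real_smul_eq a x, real_smul_eq b y]
        exact (psd_smul hx.1 ha).add (psd_smul hy.1 hb)
      · rw [Matrix.trace_add, Matrix.trace_smul, Matrix.trace_smul, hx.2, hy.2,
          Complex.real_smul, Complex.real_smul, mul_one, mul_one, ← Complex.ofReal_add, hab,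
          Complex.ofReal_one]
    intro σ hσ
    exact convexHull_min (Set.iUnion_subset fun k σ' h => hdens k σ' h) hconv hσ
  -- basic bddAbove / max facts for each component
  have hbddk : ∀ (k : Fin m) (ψ : Matrix (Fin d) (Fin d) ℂ),
      BddAbove {x : ℝ | ∃ σ ∈ F k, x = ip ψ σ} := by
    intro k ψ
    obtain ⟨σ, hσ, _, hmax⟩ := overlap_max (hc k) (hne k) ψ
    exact ⟨ip ψ σ, by rintro x ⟨τ, hτ, rfl⟩; exact hmax τ hτ⟩
  have hbddFh : ∀ ψ : Matrix (Fin d) (Fin d) ℂ, IsPure ψ →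
      BddAbove {x : ℝ | ∃ σ ∈ Fh, x = ip ψ σ} := by
    intro ψ hψ
    exact ⟨1, by rintro x ⟨σ, hσ, rfl⟩; exact ip_le_one hψ (hFhdens σ hσ)⟩
  have hMk_nonneg : ∀ (k : Fin m) (ψ : Matrix (Fin d) (Fin d) ℂ), ψ.PosSemidef →
      0 ≤ RminInv (F k) ψ := by
    intro k ψ hψ
    obtain ⟨σ0, hσ0⟩ := hne k
    exact le_trans (ip_nonneg hψ (hdens k σ0 hσ0).1) (le_csSup (hbddk k ψ) ⟨σ0, hσ0, rfl⟩)
  obtain ⟨σs, hσsF, hceq, hσsmax⟩ := overlap_max (hc kstar) (hne kstar) φ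
  set c : ℝ := RminInv (F kstar) φ with hcdef
  -- positivity of c
  have hcpos : 0 < c := by
    rcases (hMk_nonneg kstar φ hφ.1.1).lt_or_eq with h | h
    · exact h
    exfalso
    have hall : ∀ ψ : Matrix (Fin d) (Fin d) ℂ, IsPure ψ → RminInv (F kstar) ψ = 0 := by
      intro ψ hψ
      have h1 := hmaxim ψ hψ
      have hc0' : c = 0 := hcdef.trans h.symm
      rw [Rmin, Rmin, ← hcdef, hc0', div_zero] at h1
      have h2 : (0:ℝ) ≤ 1 / RminInv (F kstar) ψ :=
        one_div_nonneg.mpr (hMk_nonneg kstar ψ hψ.1.1)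
      have h3 : 1 / RminInv (F kstar) ψ = 0 := le_antisymm h1 h2
      rcases div_eq_zero_iff.mp h3 with h4 | h4
      · exact absurd h4 one_ne_zero
      · exact h4
    have htr1 : ∑ i, (σs i i).re = 1 := by
      have ht := congrArg Complex.re (hdens kstar σs hσsF).2
      rw [Matrix.trace] at ht
      simpa [Complex.re_sum, Matrix.diag] using ht
    have hex : ∃ i, 0 < (σs i i).re := by
      by_contra hno
      push_neg at hno
      have : (∑ i, (σs i i).re) ≤ 0 := Finset.sum_nonpos fun i _ => hno i
      linarith
    obtain ⟨i, hi⟩ := hex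
    set e : Fin d → ℂ := Pi.single i 1 with hedef
    have hse : star e = e := by
      ext k'; by_cases hk : k' = i <;> simp [hedef, Pi.single_apply, hk]
    have hee : star e ⬝ᵥ e = 1 := by
      rw [hse, hedef, single_dotProduct, one_mul, Pi.single_apply, if_pos rfl]
    have hpe : IsPure (vecMulVec e (star e)) := pure_vmv hee
    have hipe : ip (vecMulVec e (star e)) σs = (σs i i).re := by
      rw [ip_vmv, hse, hedef, Matrix.mulVec_single, single_dotProduct]
      simp
    have hle : ip (vecMulVec e (star e)) σs ≤ RminInv (F kstar) (vecMulVec e (star e)) :=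
      le_csSup (hbddk kstar (vecMulVec e (star e))) ⟨σs, hσsF, rfl⟩
    rw [hall _ hpe, hipe] at hle
    linarith
  -- every pure state has overlap at least c with F kstar
  have hA : ∀ ψ : Matrix (Fin d) (Fin d) ℂ, IsPure ψ → c ≤ RminInv (F kstar) ψ := by
    intro ψ hψ
    by_contra hlt
    push_neg at hlt
    have hM0 : RminInv (F kstar) ψ = 0 := by
      rcases (hMk_nonneg kstar ψ hψ.1.1).lt_or_eq with hpos | hzero
      · exfalso
        have h1 := hmaxim ψ hψ
        rw [Rmin, Rmin] at h1
        have h2 : 1 / c < 1 / RminInv (F kstar) ψ := one_div_lt_one_div_of_lt hpos hlt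
        have h3 : (RminInv (F kstar) φ) = c := hcdef.symm
        rw [h3] at h1
        linarith
      · exact hzero.symm
    obtain ⟨u, hu1, hψu⟩ := pure_decomp hψ
    obtain ⟨v, hv1, hφv⟩ := pure_decomp hφ
    have hzero : ∀ σ ∈ F kstar, σ *ᵥ u = 0 := by
      intro σ hσ
      have h1 : ip ψ σ ≤ 0 := hM0 ▸ le_csSup (hbddk kstar ψ) ⟨σ, hσ, rfl⟩
      have h2 : 0 ≤ ip ψ σ := ip_nonneg hψ.1.1 (hdens kstar σ hσ).1
      have h3 : ip ψ σ = 0 := le_antisymm h1 h2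
      rw [hψu, ip_vmv] at h3
      have hq := (hdens kstar σ hσ).1.dotProduct_mulVec_nonneg u
      rw [Complex.nonneg_iff] at hq
      have hq0 : star u ⬝ᵥ σ *ᵥ u = 0 := Complex.ext (by rw [h3]; rfl) (by rw [← hq.2]; rfl)
      exact ((hdens kstar σ hσ).1.dotProduct_mulVec_zero_iff u).mp hq0
    set c0 : ℂ := star u ⬝ᵥ v with hc0def
    set s : ℂ := if c0 = 0 then 1 else c0 / ((‖c0‖ : ℝ) : ℂ) with hsdef
    have habs0 : ‖c0‖ = 0 ↔ c0 = 0 := by simp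
    have hss : star s * s = 1 ∧ star s * c0 = ((‖c0‖ : ℝ) : ℂ) := by
      by_cases h0 : c0 = 0
      · constructor <;> simp [hsdef, h0]
      · have habs : ‖c0‖ ≠ 0 := fun hh => h0 (habs0.mp hh)
        have hAne : ((‖c0‖ : ℝ) : ℂ) ≠ 0 := Complex.ofReal_ne_zero.mpr habs
        have hcc : (starRingEnd ℂ) c0 * c0
            = ((‖c0‖:ℝ):ℂ) * ((‖c0‖:ℝ):ℂ) := by
          rw [mul_comm, Complex.mul_conj, Complex.normSq_eq_norm_sq]
          push_cast
          ring
        have hstar_s : star s = (starRingEnd ℂ) c0 / ((‖c0‖ : ℝ) : ℂ) := by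
          rw [hsdef, if_neg h0, Complex.star_def, map_div₀, Complex.conj_ofReal]
        constructor
        · rw [hstar_s, hsdef, if_neg h0, div_mul_div_comm, hcc,
            div_self (mul_ne_zero hAne hAne)]
        · rw [hstar_s, div_mul_eq_mul_div, hcc, mul_div_assoc, div_self hAne, mul_one]
    set w : Fin d → ℂ := s • u + v with hwdef
    have hsvu : star v ⬝ᵥ u = star c0 := by
      rw [hc0def]
      simp only [dotProduct, star_sum, star_mul', star_star, Pi.star_apply]
      exact Finset.sum_congr rfl fun k _ => by ring
    have h5 : s * star c0 = ((‖c0‖ : ℝ) : ℂ) := by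
      have h6 := congrArg star hss.2
      rw [star_mul', star_star] at h6
      rw [h6]
      rw [Complex.star_def, Complex.conj_ofReal]
    have hN : star w ⬝ᵥ w = ((2 + 2 * ‖c0‖ : ℝ) : ℂ) := by
      have hexp : star w ⬝ᵥ w
          = (star s * s) * (star u ⬝ᵥ u) + star s * (star u ⬝ᵥ v)
            + s * (star v ⬝ᵥ u) + star v ⬝ᵥ v := by
        rw [hwdef]
        simp only [star_add, star_smul, add_dotProduct, dotProduct_add, smul_dotProduct,
          dotProduct_smul, smul_eq_mul]
        ring
      rw [hexp, hu1, hv1, ← hc0def, hsvu, mul_one, hss.1, h5, hss.2]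
      push_cast
      ring
    set r : ℝ := 2 + 2 * ‖c0‖ with hrdef
    have hr2 : (2:ℝ) ≤ r := by
      have := norm_nonneg c0
      rw [hrdef]
      linarith
    have hrpos : (0:ℝ) < r := by linarith
    set b : ℂ := ((Real.sqrt r : ℝ) : ℂ)⁻¹ with hbdef
    have hsb : star b = b := by
      rw [hbdef]
      simp [Complex.star_def, map_inv₀, Complex.conj_ofReal]
    have hbb : b * b = ((r : ℝ) : ℂ)⁻¹ := by
      rw [hbdef, ← mul_inv, ← Complex.ofReal_mul, Real.mul_self_sqrt hrpos.le]
    set v' : Fin d → ℂ := b • w with hv'def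
    have hv'1 : star v' ⬝ᵥ v' = 1 := by
      rw [hv'def, star_smul, smul_dotProduct, dotProduct_smul, hsb, hN,
        smul_eq_mul, smul_eq_mul, ← mul_assoc, hbb]
      exact inv_mul_cancel₀ (by exact_mod_cast hrpos.ne')
    have hψ' : IsPure (vecMulVec v' (star v')) := pure_vmv hv'1
    have hw0 : ∀ σ ∈ F kstar, star w ⬝ᵥ σ *ᵥ w = star v ⬝ᵥ σ *ᵥ v := by
      intro σ hσ
      have hu0 : star u ⬝ᵥ σ *ᵥ v = 0 := by
        have h5 : star u ᵥ* σ = 0 := by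
          have h6 := Matrix.star_mulVec (M := σ) (v := u)
          rw [hzero σ hσ, (hdens kstar σ hσ).1.1.eq] at h6
          simpa using h6.symm
        rw [Matrix.dotProduct_mulVec, h5, zero_dotProduct]
      rw [hwdef, Matrix.mulVec_add, Matrix.mulVec_smul, hzero σ hσ, smul_zero, zero_add,
        star_add, star_smul, add_dotProduct, smul_dotProduct, hu0, smul_zero, zero_add]
    have hip' : ∀ σ ∈ F kstar, ip (vecMulVec v' (star v')) σ = r⁻¹ * ip φ σ := by
      intro σ hσ
      rw [ip_vmv, hφv, ip_vmv, hv'def, star_smul, smul_dotProduct, Matrix.mulVec_smul,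
        dotProduct_smul, hsb, smul_eq_mul, smul_eq_mul, ← mul_assoc, hbb, hw0 σ hσ]
      rw [← Complex.ofReal_inv, Complex.re_ofReal_mul]
    have hcip : ip φ σs = c := hceq.symm
    have hM' : RminInv (F kstar) (vecMulVec v' (star v')) = r⁻¹ * c := by
      apply le_antisymm
      · refine csSup_le ⟨r⁻¹ * c, σs, hσsF, by rw [hip' σs hσsF, hcip]⟩ ?_
        rintro x ⟨τ, hτ, rfl⟩
        rw [hip' τ hτ]
        have := hσsmax τ hτ
        rw [hcip] at this
        exact mul_le_mul_of_nonneg_left this (inv_nonneg.mpr hrpos.le)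
      · exact le_csSup (hbddk kstar _) ⟨σs, hσsF, by rw [hip' σs hσsF, hcip]⟩
    have hfin := hmaxim _ hψ'
    rw [Rmin, Rmin, hM', ← hcdef] at hfin
    have h7 : 1 / (r⁻¹ * c) = r * (1 / c) := by
      field_simp
    rw [h7] at hfin
    have h8 : 0 < 1 / c := by positivity
    nlinarith
  -- each component overlap at φ lies in (0, c]
  have hCk : ∀ k : Fin m, 0 < RminInv (F k) φ ∧ RminInv (F k) φ ≤ c := by
    intro k
    have h1 := hargmin k
    rw [Rmin, Rmin, ← hcdef] at h1
    have h1c : 0 < 1 / c := by positivity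
    have hMkpos : 0 < RminInv (F k) φ := by
      by_contra hno
      push_neg at hno
      have : 1 / RminInv (F k) φ ≤ 0 := one_div_nonpos.mpr hno
      linarith
    exact ⟨hMkpos, (one_div_le_one_div hcpos hMkpos).mp h1⟩
  -- all overlaps with the hull at φ are at most c
  have hD : ∀ σ ∈ Fh, ip φ σ ≤ c := by
    have hconv2 : Convex ℝ {σ : Matrix (Fin d) (Fin d) ℂ | ip φ σ ≤ c} := by
      intro x hx y hy a b ha hb hab
      simp only [Set.mem_setOf_eq] at hx hy ⊢
      have hlin : ip φ (a • x + b • y) = a * ip φ x + b * ip φ y := by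
        rw [real_smul_eq, real_smul_eq, ip_add_right, ip_smul_right, ip_smul_right]
      rw [hlin]
      calc a * ip φ x + b * ip φ y ≤ a * c + b * c :=
            add_le_add (mul_le_mul_of_nonneg_left hx ha) (mul_le_mul_of_nonneg_left hy hb)
        _ = c := by rw [← add_mul, hab, one_mul]
    intro σ hσ
    refine convexHull_min ?_ hconv2 hσ
    intro σ' hσ'
    rw [Set.mem_iUnion] at hσ'
    obtain ⟨k, hk⟩ := hσ'
    exact le_trans (le_csSup (hbddk k φ) ⟨σ', hk, rfl⟩) (hCk k).2
  -- overlap with the hull at φ equals c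
  have hE : RminInv Fh φ = c := by
    apply le_antisymm
    · refine csSup_le ⟨ip φ σs, σs, hsub kstar hσsF, rfl⟩ ?_
      rintro x ⟨τ, hτ, rfl⟩
      exact hD τ hτ
    · exact le_csSup (hbddFh φ hφ) ⟨σs, hsub kstar hσsF, hceq⟩
  -- Rmax side
  have hRmaxk : Rmax (F kstar) φ = 1 / c := by rw [heq, Rmin, ← hcdef]
  have hSkbdd : BddAbove {x : ℝ | ∃ W : Matrix (Fin d) (Fin d) ℂ,
      W.PosSemidef ∧ (∀ σ ∈ F kstar, ip W σ ≤ 1) ∧ x = ip φ W} := by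
    by_contra hno
    rw [Rmax, Real.sSup_of_not_bddAbove hno] at hRmaxk
    have : 0 < 1 / c := by positivity
    linarith
  have hsubS : {x : ℝ | ∃ W : Matrix (Fin d) (Fin d) ℂ,
        W.PosSemidef ∧ (∀ σ ∈ Fh, ip W σ ≤ 1) ∧ x = ip φ W}
      ⊆ {x : ℝ | ∃ W : Matrix (Fin d) (Fin d) ℂ,
        W.PosSemidef ∧ (∀ σ ∈ F kstar, ip W σ ≤ 1) ∧ x = ip φ W} := by
    rintro x ⟨W, h1, h2, h3⟩
    exact ⟨W, h1, fun σ hσ => h2 σ (hsub kstar hσ), h3⟩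
  have hSFhbdd := hSkbdd.mono hsubS
  have h0mem : (0:ℝ) ∈ {x : ℝ | ∃ W : Matrix (Fin d) (Fin d) ℂ,
      W.PosSemidef ∧ (∀ σ ∈ Fh, ip W σ ≤ 1) ∧ x = ip φ W} := by
    refine ⟨0, Matrix.PosSemidef.zero, fun σ _ => ?_, ?_⟩
    · rw [ip, Matrix.zero_mul, Matrix.trace_zero]
      norm_num
    · rw [ip, Matrix.mul_zero, Matrix.trace_zero]
      norm_num
  have hle1 : Rmax Fh φ ≤ 1 / c := by
    rw [← hRmaxk, Rmax, Rmax]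
    exact csSup_le_csSup hSkbdd ⟨0, h0mem⟩ hsubS
  have hipφφ : ip φ φ = 1 := by
    rw [ip, hφ.2, hφ.1.2]
    norm_num
  have hge1 : 1 / c ≤ Rmax Fh φ := by
    rw [Rmax]
    refine le_csSup hSFhbdd ⟨((c⁻¹ : ℝ) : ℂ) • φ, psd_smul hφ.1.1 (inv_nonneg.mpr hcpos.le),
      fun σ hσ => ?_, ?_⟩
    · rw [ip_smul_left]
      calc c⁻¹ * ip φ σ ≤ c⁻¹ * c :=
            mul_le_mul_of_nonneg_left (hD σ hσ) (inv_nonneg.mpr hcpos.le)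
        _ = 1 := inv_mul_cancel₀ hcpos.ne'
    · rw [ip_smul_right, hipφφ, mul_one, one_div]
  have hRmaxFh : Rmax Fh φ = 1 / c := le_antisymm hle1 hge1
  have hRminFh : Rmin Fh φ = 1 / c := by rw [Rmin, hE]
  refine ⟨hRmaxFh.trans hRminFh.symm, ?_, ⟨kstar, hRmaxFh.trans hRmaxk.symm⟩, ?_⟩
  · intro k
    rw [hRmaxFh]
    calc 1 / c = Rmin (F kstar) φ := by rw [Rmin, ← hcdef]
      _ ≤ Rmin (F k) φ := hargmin k
      _ ≤ Rmax (F k) φ := hRm k φ hφ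
  · intro ψ hψ
    rw [hRminFh, Rmin]
    have h1 : c ≤ RminInv Fh ψ := by
      obtain ⟨σm, hσmF, hMeq, _⟩ := overlap_max (hc kstar) (hne kstar) ψ
      have h2 : c ≤ ip ψ σm := hMeq ▸ hA ψ hψ
      exact le_trans h2 (le_csSup (hbddFh ψ hψ) ⟨σm, hsub kstar hσmF, rfl⟩)
    exact one_div_le_one_div_of_le hcpos h1
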